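/- arXiv:1411.7632 — 7 statements merged into one kernel-verified Lean document; each statement's English description precedes it below -/
import Mathlib

section
/- Let n be a positive integer, A an n×n real matrix, P and W symmetric positive definite n×n real matrices, and Π a symmetric n×n real matrix. Then the following are equivalent: (i) Π ≻ 0 and Π ⪯ (P⁻¹ + Aᵀ W⁻¹ A)⁻¹; (ii) Π ≻ 0 and Π ⪯ P − P Aᵀ (W + A P Aᵀ)⁻¹ A P; (iii) Π ≻ 0 and the 2n×2n block matrix [[P − Π, P Aᵀ],[A P, W + A P Aᵀ]] is positive semidefinite. -/
open Matrix

/-- For `A` an `n × n` real matrix, `P`, `W` symmetric positive definite,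
and `Q` (playing the role of `Π`) a symmetric `n × n` real matrix, the following are
equivalent:
(i) `Q ≻ 0` and `Q ⪯ (P⁻¹ + Aᵀ W⁻¹ A)⁻¹`;
(ii) `Q ≻ 0` and `Q ⪯ P − P Aᵀ (W + A P Aᵀ)⁻¹ A P`;
(iii) `Q ≻ 0` and the block matrix `[[P − Q, P Aᵀ],[A P, W + A P Aᵀ]]` is positive
semidefinite. -/
theorem lmi_equiv (n : ℕ) (hn : 0 < n) (A P W Q : Matrix (Fin n) (Fin n) ℝ)
    (hP : P.PosDef) (hW : W.PosDef) (hQ : Q.IsSymm) :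
    ((Q.PosDef ∧ ((P⁻¹ + Aᵀ * W⁻¹ * A)⁻¹ - Q).PosSemidef) ↔
      (Q.PosDef ∧ (P - P * Aᵀ * (W + A * P * Aᵀ)⁻¹ * (A * P) - Q).PosSemidef)) ∧
    ((Q.PosDef ∧ (P - P * Aᵀ * (W + A * P * Aᵀ)⁻¹ * (A * P) - Q).PosSemidef) ↔
      (Q.PosDef ∧
        (fromBlocks (P - Q) (P * Aᵀ) (A * P) (W + A * P * Aᵀ)).PosSemidef)) := by
  have hAP : (A * P * Aᵀ).PosSemidef := by
    have := hP.posSemidef.mul_mul_conjTranspose_same A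
    simpa [Matrix.conjTranspose_eq_transpose_of_trivial] using this
  have hD : (W + A * P * Aᵀ).PosDef := hW.add_posSemidef hAP
  have hWood : (P⁻¹ + Aᵀ * W⁻¹ * A)⁻¹ =
      P - P * Aᵀ * (W + A * P * Aᵀ)⁻¹ * (A * P) := by
    have hPi : P⁻¹⁻¹ = P := Matrix.nonsing_inv_nonsing_inv _ hP.det_pos.ne'.isUnit
    have hWi : W⁻¹⁻¹ = W := Matrix.nonsing_inv_nonsing_inv _ hW.det_pos.ne'.isUnit
    have h := Matrix.add_mul_mul_inv_eq_sub P⁻¹ Aᵀ W⁻¹ A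
      ((Matrix.isUnit_nonsing_inv_iff).2 hP.isUnit)
      ((Matrix.isUnit_nonsing_inv_iff).2 hW.isUnit) ?_
    · rw [h, hPi, hWi, Matrix.mul_assoc]
    · rw [hPi, hWi]
      exact hD.isUnit
  constructor
  · rw [hWood]
  · have hPAt : (P * Aᵀ)ᴴ = A * P := by
      have hPs : Pᵀ = P := by
        simpa [Matrix.conjTranspose_eq_transpose_of_trivial] using hP.isHermitian.eq
      rw [Matrix.conjTranspose_eq_transpose_of_trivial, Matrix.transpose_mul,
        Matrix.transpose_transpose, hPs]
    letI := hD.isUnit.invertible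
    have hblk := Matrix.PosDef.fromBlocks₂₂ (P - Q) (P * Aᵀ) hD
    rw [hPAt] at hblk
    rw [hblk]
    rw [sub_right_comm]
end

section
/- Let n be a positive integer, A an n×n real matrix, and P, W symmetric positive definite n×n real matrices. Then ½ log det(A P Aᵀ + W) − ½ log det P = ½ log det W + inf { −½ log det Π : Π symmetric, Π ≻ 0, and the block matrix [[P − Π, P Aᵀ],[A P, W + A P Aᵀ]] is positive semidefinite }, and the infimum is attained (at Π = (P⁻¹ + Aᵀ W⁻¹ A)⁻¹). -/
open Matrix


lemma one_le_det_one_add {n : ℕ} {N : Matrix (Fin n) (Fin n) ℝ} (hN : N.PosSemidef) :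
    1 ≤ (1 + N).det := by
  have h1 : (1 + N).PosSemidef := Matrix.PosSemidef.one.add hN
  have hH := h1.1
  rw [hH.det_eq_prod_eigenvalues]
  simp only [RCLike.ofReal_real_eq_id, id_eq]
  calc (1:ℝ) = ∏ _i : Fin n, 1 := by simp
    _ ≤ ∏ i, hH.eigenvalues i := Finset.prod_le_prod (fun _ _ => zero_le_one) fun i _ => ?_
  have heig := hH.eigenvalues_eq i
  have hnorm : ‖hH.eigenvectorBasis i‖ = 1 := hH.eigenvectorBasis.orthonormal.1 i
  have hvv : dotProduct (star ⇑(hH.eigenvectorBasis i)) ⇑(hH.eigenvectorBasis i) = 1 := by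
    have h2 := EuclideanSpace.inner_eq_star_dotProduct (hH.eigenvectorBasis i) (hH.eigenvectorBasis i)
    rw [real_inner_self_eq_norm_sq, hnorm] at h2
    simpa using h2.symm
  have hpos := hN.dotProduct_mulVec_nonneg ⇑(hH.eigenvectorBasis i)
  rw [heig]
  simp only [add_mulVec, one_mulVec, dotProduct_add, hvv] at *
  rw [RCLike.re_to_real]
  linarith [hpos]

open scoped MatrixOrder in
lemma det_le_det_of_posSemidef_sub {n : ℕ} {Q R : Matrix (Fin n) (Fin n) ℝ}
    (hQ : Q.PosDef) (h : (R - Q).PosSemidef) : Q.det ≤ R.det := by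
  set s := CFC.sqrt Q with hs_def
  have hss : s * s = Q := CFC.sqrt_mul_sqrt_self Q hQ.posSemidef.nonneg
  have hs_psd : s.PosSemidef := (CFC.sqrt_nonneg Q).posSemidef
  have hdet : s.det * s.det = Q.det := by rw [← Matrix.det_mul, hss]
  have hs_unit : IsUnit s.det := by
    refine isUnit_iff_ne_zero.mpr fun h0 => ?_
    have := hQ.det_pos
    rw [← hdet, h0, mul_zero] at this
    exact lt_irrefl _ this
  have hsinv_herm : (s⁻¹)ᴴ = s⁻¹ := by
    rw [Matrix.conjTranspose_nonsing_inv, hs_psd.1.eq]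
  set N := s⁻¹ * (R - Q) * s⁻¹ with hN_def
  have hN : N.PosSemidef := by
    have := h.mul_mul_conjTranspose_same s⁻¹
    rwa [hsinv_herm] at this
  have h1 : s * s⁻¹ = 1 := Matrix.mul_nonsing_inv _ hs_unit
  have h2 : s⁻¹ * s = 1 := Matrix.nonsing_inv_mul _ hs_unit
  have hR : R = s * (1 + N) * s := by
    rw [Matrix.mul_add, Matrix.mul_one, Matrix.add_mul, hss, hN_def]
    have : s * (s⁻¹ * (R - Q) * s⁻¹) * s = (s * s⁻¹) * (R - Q) * (s⁻¹ * s) := by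
      simp only [Matrix.mul_assoc]
    rw [this, h1, h2, Matrix.one_mul, Matrix.mul_one, add_sub_cancel]
  have h1N := one_le_det_one_add hN
  rw [hR, Matrix.det_mul, Matrix.det_mul]
  nlinarith [hQ.det_pos, hdet]

/-- The feasible-value set of the per-stage determinant maximization:
values `−½ log det Q` over symmetric `Q ≻ 0` such that the block matrix
`[[P − Q, P Aᵀ],[A P, W + A P Aᵀ]]` is positive semidefinite. -/
def stageFeasValues (n : ℕ) (A P W : Matrix (Fin n) (Fin n) ℝ) : Set ℝ :=
  {x : ℝ | ∃ Q : Matrix (Fin n) (Fin n) ℝ, Q.PosDef ∧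
    (fromBlocks (P - Q) (P * Aᵀ) (A * P) (W + A * P * Aᵀ)).PosSemidef ∧
    x = -(1 / 2) * Real.log Q.det}

/-- For `A` an `n × n` real matrix and `P`, `W` symmetric positive
definite, `½ log det (A P Aᵀ + W) − ½ log det P` equals
`½ log det W + inf {−½ log det Q : Q ≻ 0, [[P − Q, P Aᵀ],[A P, W + A P Aᵀ]] ⪰ 0}`,
and the infimum is attained at `Q = (P⁻¹ + Aᵀ W⁻¹ A)⁻¹`. -/
theorem stage_cost_sdp (n : ℕ) (hn : 0 < n) (A P W : Matrix (Fin n) (Fin n) ℝ)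
    (hP : P.PosDef) (hW : W.PosDef) :
    (1 / 2) * Real.log (A * P * Aᵀ + W).det - (1 / 2) * Real.log P.det =
      (1 / 2) * Real.log W.det + sInf (stageFeasValues n A P W) ∧
    ((P⁻¹ + Aᵀ * W⁻¹ * A)⁻¹).PosDef ∧
    (fromBlocks (P - (P⁻¹ + Aᵀ * W⁻¹ * A)⁻¹) (P * Aᵀ) (A * P)
        (W + A * P * Aᵀ)).PosSemidef ∧
    sInf (stageFeasValues n A P W) =
      -(1 / 2) * Real.log ((P⁻¹ + Aᵀ * W⁻¹ * A)⁻¹).det := by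
  classical
  have hPt : Pᵀ = P := by
    have := hP.1.eq
    rwa [Matrix.conjTranspose_eq_transpose_of_trivial] at this
  have hAPAt : (A * P * Aᵀ).PosSemidef := by
    have := hP.posSemidef.mul_mul_conjTranspose_same A
    rwa [Matrix.conjTranspose_eq_transpose_of_trivial] at this
  have hD : (W + A * P * Aᵀ).PosDef := hW.add_posSemidef hAPAt
  have hS : (P⁻¹ + Aᵀ * W⁻¹ * A).PosDef := by
    have h1 : (Aᵀ * W⁻¹ * A).PosSemidef := by
      have := (hW.inv).posSemidef.conjTranspose_mul_mul_same A
      rwa [Matrix.conjTranspose_eq_transpose_of_trivial] at this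
    exact hP.inv.add_posSemidef h1
  have hQ0 : ((P⁻¹ + Aᵀ * W⁻¹ * A)⁻¹).PosDef := hS.inv
  have hPinv2 : (P⁻¹)⁻¹ = P := Matrix.nonsing_inv_nonsing_inv P hP.det_pos.ne'.isUnit
  have hWinv2 : (W⁻¹)⁻¹ = W := Matrix.nonsing_inv_nonsing_inv W hW.det_pos.ne'.isUnit
  -- Woodbury
  have hWood : (P⁻¹ + Aᵀ * W⁻¹ * A)⁻¹ = P - P * Aᵀ * (W + A * P * Aᵀ)⁻¹ * A * P := by
    have hAC : IsUnit ((W⁻¹)⁻¹ + A * (P⁻¹)⁻¹ * Aᵀ) := by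
      rw [hPinv2, hWinv2]; exact hD.isUnit
    have := Matrix.add_mul_mul_inv_eq_sub (P⁻¹) Aᵀ (W⁻¹) A hP.inv.isUnit hW.inv.isUnit hAC
    rwa [hPinv2, hWinv2] at this
  haveI : Invertible (W + A * P * Aᵀ) :=
    (W + A * P * Aᵀ).invertibleOfIsUnitDet hD.det_pos.ne'.isUnit
  have hAP : (P * Aᵀ)ᴴ = A * P := by
    rw [Matrix.conjTranspose_eq_transpose_of_trivial, Matrix.transpose_mul,
      Matrix.transpose_transpose, hPt]
  -- Schur complement characterization of feasibility
  have hSchur : ∀ Q : Matrix (Fin n) (Fin n) ℝ,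
      (fromBlocks (P - Q) (P * Aᵀ) (A * P) (W + A * P * Aᵀ)).PosSemidef ↔
        ((P⁻¹ + Aᵀ * W⁻¹ * A)⁻¹ - Q).PosSemidef := by
    intro Q
    have hblk : fromBlocks (P - Q) (P * Aᵀ) (A * P) (W + A * P * Aᵀ) =
        fromBlocks (P - Q) (P * Aᵀ) ((P * Aᵀ)ᴴ) (W + A * P * Aᵀ) := by rw [hAP]
    rw [hblk, Matrix.PosDef.fromBlocks₂₂ _ _ hD]
    have heq : P - Q - P * Aᵀ * (W + A * P * Aᵀ)⁻¹ * (P * Aᵀ)ᴴ =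
        (P⁻¹ + Aᵀ * W⁻¹ * A)⁻¹ - Q := by
      rw [hAP, hWood]
      noncomm_ring
    rw [heq]
  -- the minimizer is feasible
  have hfeas0 : (fromBlocks (P - (P⁻¹ + Aᵀ * W⁻¹ * A)⁻¹) (P * Aᵀ) (A * P)
      (W + A * P * Aᵀ)).PosSemidef := by
    rw [hSchur, sub_self]
    exact Matrix.PosSemidef.zero
  have hmem : (-(1 / 2) * Real.log ((P⁻¹ + Aᵀ * W⁻¹ * A)⁻¹).det) ∈
      stageFeasValues n A P W := ⟨_, hQ0, hfeas0, rfl⟩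
  have hlb : ∀ x ∈ stageFeasValues n A P W,
      -(1 / 2) * Real.log ((P⁻¹ + Aᵀ * W⁻¹ * A)⁻¹).det ≤ x := by
    rintro x ⟨Q, hQ, hfeas, rfl⟩
    have h1 : ((P⁻¹ + Aᵀ * W⁻¹ * A)⁻¹ - Q).PosSemidef := (hSchur Q).mp hfeas
    have h2 : Q.det ≤ ((P⁻¹ + Aᵀ * W⁻¹ * A)⁻¹).det := det_le_det_of_posSemidef_sub hQ h1
    have h3 : Real.log Q.det ≤ Real.log ((P⁻¹ + Aᵀ * W⁻¹ * A)⁻¹).det :=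
      Real.log_le_log hQ.det_pos h2
    linarith
  have hsInf : sInf (stageFeasValues n A P W) =
      -(1 / 2) * Real.log ((P⁻¹ + Aᵀ * W⁻¹ * A)⁻¹).det :=
    (IsLeast.csInf_eq ⟨hmem, hlb⟩)
  -- determinant identity
  have h1 : P * (P⁻¹ + Aᵀ * W⁻¹ * A) = 1 + (P * Aᵀ) * (W⁻¹ * A) := by
    rw [Matrix.mul_add, Matrix.mul_nonsing_inv _ hP.det_pos.ne'.isUnit]
    noncomm_ring
  have h2 : W⁻¹ * (W + A * P * Aᵀ) = 1 + (W⁻¹ * A) * (P * Aᵀ) := by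
    rw [Matrix.mul_add, Matrix.nonsing_inv_mul _ hW.det_pos.ne'.isUnit]
    noncomm_ring
  have h3 := Matrix.det_one_add_mul_comm (P * Aᵀ) (W⁻¹ * A)
  have h4 : P.det * (P⁻¹ + Aᵀ * W⁻¹ * A).det = W⁻¹.det * (W + A * P * Aᵀ).det := by
    rw [← Matrix.det_mul, ← Matrix.det_mul, h1, h2, h3]
  have h5 : W⁻¹.det = W.det⁻¹ := by
    rw [Matrix.det_nonsing_inv, Ring.inverse_eq_inv']
  have hdetQ0 : ((P⁻¹ + Aᵀ * W⁻¹ * A)⁻¹).det = ((P⁻¹ + Aᵀ * W⁻¹ * A).det)⁻¹ := by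
    rw [Matrix.det_nonsing_inv, Ring.inverse_eq_inv']
  have hPd := hP.det_pos
  have hWd := hW.det_pos
  have hSd := hS.det_pos
  have hDd := hD.det_pos
  have hdetD : (W + A * P * Aᵀ).det = W.det * (P.det * (P⁻¹ + Aᵀ * W⁻¹ * A).det) := by
    rw [h5] at h4
    have h7 : W.det * W.det⁻¹ = 1 := mul_inv_cancel₀ hWd.ne'
    linear_combination (-W.det) * h4 + (-(W + A * P * Aᵀ).det) * h7
  refine ⟨?_, hQ0, hfeas0, hsInf⟩
  rw [hsInf]
  have hcomm : A * P * Aᵀ + W = W + A * P * Aᵀ := add_comm _ _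
  rw [hcomm, hdetD, Real.log_mul hWd.ne' (by positivity),
    Real.log_mul hPd.ne' hSd.ne', hdetQ0, Real.log_inv]
  ring
end

section
/- Fix integers T ≥ 1 and n ≥ 1, matrices A_t ∈ ℝ^{n×n} and symmetric positive definite W_t (t = 0,…,T−1), a symmetric positive definite P_0, and symmetric positive semidefinite Θ_t and reals D_t > 0 (t = 1,…,T). Then the max-det problem is strictly feasible: there exists δ > 0 such that the tuple with P_t = δ I for t = 1,…,T−1 and Π_t = δ² I for t = 1,…,T and P_T = δ² I satisfies all the constraints of the max-det feasible set F, with the matrix inequalities P_{t+1} ≺ A_t P_t A_tᵀ + W_t and [[P_t − Π_t, P_t A_tᵀ],[A_t P_t, W_t + A_t P_t A_tᵀ]] ≻ 0 holding strictly and Tr(Θ_t P_t) < D_t. -/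
open Matrix

private lemma quad_bound {n : ℕ} (N : Matrix (Fin n) (Fin n) ℝ) (x : Fin n → ℝ) :
    x ⬝ᵥ N *ᵥ x ≤ (∑ i, ∑ j, |N i j|) * ‖x‖ ^ 2 := by
  have h1 : x ⬝ᵥ N *ᵥ x = ∑ i, ∑ j, x i * (N i j * x j) := by
    simp [dotProduct, mulVec, Finset.mul_sum]
  rw [h1, Finset.sum_mul]
  apply Finset.sum_le_sum
  intro i _
  rw [Finset.sum_mul]
  apply Finset.sum_le_sum
  intro j _
  have hxi : |x i| ≤ ‖x‖ := by
    simpa [Real.norm_eq_abs] using norm_le_pi_norm x i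
  have hxj : |x j| ≤ ‖x‖ := by
    simpa [Real.norm_eq_abs] using norm_le_pi_norm x j
  have hx0 : (0:ℝ) ≤ ‖x‖ := norm_nonneg x
  calc x i * (N i j * x j) ≤ |x i * (N i j * x j)| := le_abs_self _
    _ = |N i j| * (|x i| * |x j|) := by rw [abs_mul, abs_mul]; ring
    _ ≤ |N i j| * (‖x‖ * ‖x‖) := by
        apply mul_le_mul_of_nonneg_left _ (abs_nonneg _)
        exact mul_le_mul hxi hxj (abs_nonneg _) hx0
    _ = |N i j| * ‖x‖ ^ 2 := by ring

private lemma quad_lower {n : ℕ} (hn : 0 < n) {M : Matrix (Fin n) (Fin n) ℝ}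
    (hM : M.PosDef) :
    ∃ m > 0, ∀ x : Fin n → ℝ, m * ‖x‖ ^ 2 ≤ x ⬝ᵥ M *ᵥ x := by
  have hcont : Continuous fun x : Fin n → ℝ => x ⬝ᵥ M *ᵥ x := by
    have h1 : (fun x : Fin n → ℝ => x ⬝ᵥ M *ᵥ x)
        = fun x => ∑ i, ∑ j, x i * (M i j * x j) := by
      ext x; simp [dotProduct, mulVec, Finset.mul_sum]
    rw [h1]
    exact continuous_finset_sum _ fun i _ => continuous_finset_sum _ fun j _ =>
      (continuous_apply i).mul (continuous_const.mul (continuous_apply j))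
  haveI : Nonempty (Fin n) := ⟨⟨0, hn⟩⟩
  have hne : (Metric.sphere (0 : Fin n → ℝ) 1).Nonempty :=
    NormedSpace.sphere_nonempty.mpr zero_le_one
  obtain ⟨u, hu, humin⟩ := (isCompact_sphere (0 : Fin n → ℝ) 1).exists_isMinOn hne
    hcont.continuousOn
  have hunorm : ‖u‖ = 1 := by simpa using mem_sphere_zero_iff_norm.mp hu
  have hu0 : u ≠ 0 := by
    intro h; rw [h] at hunorm; simp at hunorm
  refine ⟨u ⬝ᵥ M *ᵥ u, by simpa using hM.dotProduct_mulVec_pos hu0, fun x => ?_⟩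
  by_cases hx : x = 0
  · simp [hx]
  · have hrpos : 0 < ‖x‖ := norm_pos_iff.mpr hx
    have hmem : ‖x‖⁻¹ • x ∈ Metric.sphere (0 : Fin n → ℝ) 1 := by
      simp [norm_smul, abs_of_pos (inv_pos.mpr hrpos), inv_mul_cancel₀ hrpos.ne']
    have hle := isMinOn_iff.mp humin _ hmem
    have hscale : (‖x‖⁻¹ • x) ⬝ᵥ M *ᵥ (‖x‖⁻¹ • x)
        = ‖x‖⁻¹ * (‖x‖⁻¹ * (x ⬝ᵥ M *ᵥ x)) := by
      simp [smul_dotProduct, dotProduct_smul, mulVec_smul, smul_eq_mul]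
    rw [hscale] at hle
    have h2 : (u ⬝ᵥ M *ᵥ u) * ‖x‖ ^ 2 ≤ x ⬝ᵥ M *ᵥ x := by
      have := mul_le_mul_of_nonneg_left hle (le_of_lt (mul_pos hrpos hrpos))
      calc (u ⬝ᵥ M *ᵥ u) * ‖x‖ ^ 2 = ‖x‖ * ‖x‖ * (u ⬝ᵥ M *ᵥ u) := by ring
        _ ≤ ‖x‖ * ‖x‖ * (‖x‖⁻¹ * (‖x‖⁻¹ * (x ⬝ᵥ M *ᵥ x))) := this
        _ = x ⬝ᵥ M *ᵥ x := by field_simp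
    exact h2

private lemma exists_eps {n : ℕ} (hn : 0 < n) {M N : Matrix (Fin n) (Fin n) ℝ}
    (hM : M.PosDef) (hN : N.IsHermitian) :
    ∃ ε > 0, ∀ c : ℝ, 0 ≤ c → c ≤ ε → (M - c • N).PosDef := by
  obtain ⟨m, hm, hlow⟩ := quad_lower hn hM
  set K := ∑ i, ∑ j, |N i j| with hKdef
  have hK0 : 0 ≤ K := Finset.sum_nonneg fun i _ => Finset.sum_nonneg fun j _ => abs_nonneg _
  refine ⟨m / (K + 1), by positivity, fun c hc0 hcε => ?_⟩
  refine PosDef.of_dotProduct_mulVec_pos ?_ ?_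
  · show (M - c • N)ᴴ = M - c • N
    rw [conjTranspose_sub, conjTranspose_smul, hM.1.eq, hN.eq, star_trivial]
  · intro x hx
    have hxx : 0 < ‖x‖ := norm_pos_iff.mpr hx
    have h1 := hlow x
    have h2 := quad_bound N x
    have key : x ⬝ᵥ (M - c • N) *ᵥ x = x ⬝ᵥ M *ᵥ x - c * (x ⬝ᵥ N *ᵥ x) := by
      simp [sub_mulVec, dotProduct_sub, smul_mulVec, dotProduct_smul, smul_eq_mul]
    have hstar : star x = x := by simp
    rw [hstar, key]
    have h3 : c * (x ⬝ᵥ N *ᵥ x) ≤ c * (K * ‖x‖ ^ 2) := mul_le_mul_of_nonneg_left h2 hc0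
    have h4 : c * (K * ‖x‖ ^ 2) ≤ m / (K + 1) * (K * ‖x‖ ^ 2) :=
      mul_le_mul_of_nonneg_right hcε (by positivity)
    have h5 : m / (K + 1) * (K * ‖x‖ ^ 2) < m * ‖x‖ ^ 2 := by
      rw [div_mul_eq_mul_div, div_lt_iff₀ (by positivity)]
      nlinarith [mul_pos hm (pow_pos hxx 2)]
    linarith

private lemma posDef_fromBlocks {m l : Type*} [Fintype m] [DecidableEq m] [Fintype l]
    {A : Matrix m m ℝ} (B : Matrix m l ℝ) (D : Matrix l l ℝ) (hA : A.PosDef) [Invertible A]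
    (h : (D - Bᴴ * A⁻¹ * B).PosDef) : (fromBlocks A B Bᴴ D).PosDef := by
  refine PosDef.of_dotProduct_mulVec_pos ((IsHermitian.fromBlocks₁₁ B D hA.1).mpr h.1) fun x hx => ?_
  have hxeq : x = (x ∘ Sum.inl) ⊕ᵥ (x ∘ Sum.inr) := (Sum.elim_comp_inl_inr x).symm
  set y := x ∘ Sum.inl with hy
  set z := x ∘ Sum.inr with hz
  rw [hxeq, dotProduct_mulVec, schur_complement_eq₁₁ B D y z hA.1]
  by_cases hz0 : z = 0
  · have hy0 : y ≠ 0 := by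
      intro hy0
      apply hx
      rw [hxeq, hy0, hz0]
      funext i; cases i <;> rfl
    rw [hz0]
    simp only [mulVec_zero, add_zero, star_zero, zero_vecMul, zero_dotProduct,
      dotProduct_zero]
    rw [← dotProduct_mulVec]
    exact hA.dotProduct_mulVec_pos hy0
  · refine add_pos_of_nonneg_of_pos ?_ ?_
    · rw [← dotProduct_mulVec]
      exact hA.posSemidef.dotProduct_mulVec_nonneg _
    · rw [← dotProduct_mulVec]
      exact h.dotProduct_mulVec_pos hz0

private lemma psd_trace_nonneg {n : ℕ} {M : Matrix (Fin n) (Fin n) ℝ} (h : M.PosSemidef) :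
    0 ≤ M.trace := by
  rw [Matrix.trace]
  apply Finset.sum_nonneg
  intro i _
  have h2 := h.dotProduct_mulVec_nonneg (Pi.single i 1)
  simpa [Matrix.diag, mulVec_single] using h2

/-- (Strict feasibility of the max-det problem.) There exists `δ > 0`
such that the tuple with `P t = δ I` for `t = 1, …, T−1`, `P T = δ² I` and `Π t = δ² I`
for `t = 1, …, T` satisfies all the constraints of the max-det feasible set, with the
matrix inequality constraints holding strictly and the trace constraints strictly. -/
theorem maxdet_strictly_feasible (n T : ℕ) (hn : 0 < n) (hT : 1 ≤ T)
    (A W Θ : ℕ → Matrix (Fin n) (Fin n) ℝ) (P₀ : Matrix (Fin n) (Fin n) ℝ)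
    (D : ℕ → ℝ)
    (hW : ∀ t, t < T → (W t).PosDef) (hP₀ : P₀.PosDef)
    (hΘ : ∀ t, 1 ≤ t → t ≤ T → (Θ t).PosSemidef)
    (hD : ∀ t, 1 ≤ t → t ≤ T → 0 < D t) :
    ∃ δ : ℝ, 0 < δ ∧
      ∀ P Q : ℕ → Matrix (Fin n) (Fin n) ℝ,
        (P = fun t => if t = 0 then P₀
          else if t < T then δ • (1 : Matrix (Fin n) (Fin n) ℝ)
          else δ ^ 2 • (1 : Matrix (Fin n) (Fin n) ℝ)) →
        (Q = fun _ => δ ^ 2 • (1 : Matrix (Fin n) (Fin n) ℝ)) →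
        (∀ t, 1 ≤ t → t ≤ T → (Q t).PosDef) ∧
        (∀ t, t < T → (A t * P t * (A t)ᵀ + W t - P (t + 1)).PosDef) ∧
        (∀ t, 1 ≤ t → t < T →
          (fromBlocks (P t - Q t) (P t * (A t)ᵀ) (A t * P t)
            (W t + A t * P t * (A t)ᵀ)).PosDef) ∧
        (∀ t, 1 ≤ t → t ≤ T → (Θ t * P t).trace < D t) ∧
        P T = Q T := by
  classical
  have hNA : ∀ t : ℕ, (A t * (A t)ᵀ).IsHermitian := by
    intro t
    rw [← conjTranspose_eq_transpose_of_trivial (A t)]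
    exact isHermitian_mul_conjTranspose_self (A t)
  have hE1 : ∀ t, t < T → ∃ ε > 0, ∀ c : ℝ, 0 ≤ c → c ≤ ε →
      (W t - c • (1 : Matrix (Fin n) (Fin n) ℝ)).PosDef :=
    fun t ht => exists_eps hn (hW t ht) isHermitian_one
  have hE2 : ∀ t, t < T → ∃ ε > 0, ∀ c : ℝ, 0 ≤ c → c ≤ ε →
      (W t - c • (A t * (A t)ᵀ)).PosDef :=
    fun t ht => exists_eps hn (hW t ht) (hNA t)
  set e1 : ℕ → ℝ := fun t => if h : t < T then (hE1 t h).choose else 1 with he1def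
  set e2 : ℕ → ℝ := fun t => if h : t < T then (hE2 t h).choose else 1 with he2def
  have he1pos : ∀ t, 0 < e1 t := by
    intro t
    by_cases h : t < T
    · simp only [he1def, dif_pos h]; exact (hE1 t h).choose_spec.1
    · simp [he1def, dif_neg h]
  have he2pos : ∀ t, 0 < e2 t := by
    intro t
    by_cases h : t < T
    · simp only [he2def, dif_pos h]; exact (hE2 t h).choose_spec.1
    · simp [he2def, dif_neg h]
  have he1spec : ∀ t, ∀ h : t < T, ∀ c : ℝ, 0 ≤ c → c ≤ e1 t →
      (W t - c • (1 : Matrix (Fin n) (Fin n) ℝ)).PosDef := by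
    intro t h
    simp only [he1def, dif_pos h]
    exact (hE1 t h).choose_spec.2
  have he2spec : ∀ t, ∀ h : t < T, ∀ c : ℝ, 0 ≤ c → c ≤ e2 t →
      (W t - c • (A t * (A t)ᵀ)).PosDef := by
    intro t h
    simp only [he2def, dif_pos h]
    exact (hE2 t h).choose_spec.2
  set β : ℕ → ℝ := fun t => D (t + 1) / ((Θ (t + 1)).trace + 1) with hβdef
  have hβpos : ∀ t, t < T → 0 < β t := by
    intro t ht
    have h1 := hD (t + 1) (by omega) (by omega)
    have h2 := psd_trace_nonneg (hΘ (t + 1) (by omega) (by omega))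
    exact div_pos h1 (by linarith)
  set g : ℕ → ℝ := fun t => min (e1 t) (min (e2 t) (β t)) with hgdef
  have hne : (Finset.range T).Nonempty := ⟨0, Finset.mem_range.mpr hT⟩
  set δ : ℝ := min (1 / 2) ((Finset.range T).inf' hne g) with hδdef
  have hδpos : 0 < δ := by
    apply lt_min (by norm_num)
    rw [Finset.lt_inf'_iff]
    intro t ht
    exact lt_min (he1pos t) (lt_min (he2pos t) (hβpos t (Finset.mem_range.mp ht)))
  have hδhalf : δ ≤ 1 / 2 := min_le_left _ _
  have hδ1 : δ ≤ 1 := le_trans hδhalf (by norm_num)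
  have hδg : ∀ t, t < T → δ ≤ g t := fun t ht =>
    le_trans (min_le_right _ _) (Finset.inf'_le g (Finset.mem_range.mpr ht))
  have hδe1 : ∀ t, t < T → δ ≤ e1 t := fun t ht => le_trans (hδg t ht) (min_le_left _ _)
  have hδe2 : ∀ t, t < T → δ ≤ e2 t := fun t ht =>
    le_trans (hδg t ht) (le_trans (min_le_right _ _) (min_le_left _ _))
  have hδβ : ∀ t, t < T → δ ≤ β t := fun t ht =>
    le_trans (hδg t ht) (le_trans (min_le_right _ _) (min_le_right _ _))
  have hδsq : δ ^ 2 ≤ δ := by nlinarith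
  have hsmulPD : ∀ a : ℝ, 0 < a → (a • (1 : Matrix (Fin n) (Fin n) ℝ)).PosDef := by
    intro a ha
    rw [smul_one_eq_diagonal]
    exact PosDef.diagonal fun _ => ha
  refine ⟨δ, hδpos, ?_⟩
  intro P Q hP hQ
  subst hP
  subst hQ
  refine ⟨?_, ?_, ?_, ?_, ?_⟩
  · intro t _ _
    exact hsmulPD _ (by positivity)
  · -- dynamics constraint
    intro t ht
    beta_reduce
    set c : ℝ := if t + 1 < T then δ else δ ^ 2 with hc
    have hc0 : (0:ℝ) ≤ c := by rw [hc]; split_ifs <;> positivity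
    have hcδ : c ≤ δ := by
      rw [hc]; split_ifs
      · exact le_rfl
      · exact hδsq
    have hWc : (W t - c • (1 : Matrix (Fin n) (Fin n) ℝ)).PosDef :=
      he1spec t ht c hc0 (le_trans hcδ (hδe1 t ht))
    have hPt1 : (if t + 1 = 0 then P₀ else if t + 1 < T then δ • (1 : Matrix (Fin n) (Fin n) ℝ)
        else δ ^ 2 • (1 : Matrix (Fin n) (Fin n) ℝ)) = c • (1 : Matrix (Fin n) (Fin n) ℝ) := by
      rw [if_neg (Nat.succ_ne_zero t), hc]
      split_ifs <;> rfl
    rw [hPt1]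
    rcases Nat.eq_zero_or_pos t with h0 | h1
    · subst h0
      rw [if_pos rfl]
      have hPSD : (A 0 * P₀ * (A 0)ᵀ).PosSemidef := by
        have h3 := hP₀.posSemidef.mul_mul_conjTranspose_same (A 0)
        rwa [conjTranspose_eq_transpose_of_trivial] at h3
      have heq : A 0 * P₀ * (A 0)ᵀ + W 0 - c • (1 : Matrix (Fin n) (Fin n) ℝ)
          = (W 0 - c • (1 : Matrix (Fin n) (Fin n) ℝ)) + A 0 * P₀ * (A 0)ᵀ := by
        rw [add_sub_assoc, add_comm]
      rw [heq]
      exact hWc.add_posSemidef hPSD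
    · rw [if_neg (by omega), if_pos ht]
      have hPSD : (A t * (δ • (1 : Matrix (Fin n) (Fin n) ℝ)) * (A t)ᵀ).PosSemidef := by
        have h3 := (hsmulPD δ hδpos).posSemidef.mul_mul_conjTranspose_same (A t)
        rwa [conjTranspose_eq_transpose_of_trivial] at h3
      have heq : A t * (δ • (1 : Matrix (Fin n) (Fin n) ℝ)) * (A t)ᵀ + W t
            - c • (1 : Matrix (Fin n) (Fin n) ℝ)
          = (W t - c • (1 : Matrix (Fin n) (Fin n) ℝ))
            + A t * (δ • (1 : Matrix (Fin n) (Fin n) ℝ)) * (A t)ᵀ := by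
        rw [add_sub_assoc, add_comm]
      rw [heq]
      exact hWc.add_posSemidef hPSD
  · -- Schur block constraint
    intro t h1 ht
    beta_reduce
    rw [if_neg (by omega : ¬ t = 0), if_pos ht]
    have hd : (0:ℝ) < δ - δ ^ 2 := by nlinarith
    have h1δ : (0:ℝ) < 1 - δ := by linarith
    have hB : (δ • (1 : Matrix (Fin n) (Fin n) ℝ)) * (A t)ᵀ = δ • (A t)ᵀ := by
      rw [smul_mul_assoc, one_mul]
    have hBH : ((δ • (A t)ᵀ)ᴴ : Matrix (Fin n) (Fin n) ℝ) = δ • A t := by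
      rw [conjTranspose_smul, conjTranspose_eq_transpose_of_trivial, transpose_transpose,
        star_trivial]
    have hC : A t * (δ • (1 : Matrix (Fin n) (Fin n) ℝ)) = ((δ • (A t)ᵀ)ᴴ) := by
      rw [hBH, mul_smul_comm, mul_one]
    have hA11 : δ • (1 : Matrix (Fin n) (Fin n) ℝ) - δ ^ 2 • (1 : Matrix (Fin n) (Fin n) ℝ)
        = (δ - δ ^ 2) • (1 : Matrix (Fin n) (Fin n) ℝ) := (sub_smul _ _ _).symm
    have hD' : W t + A t * (δ • (1 : Matrix (Fin n) (Fin n) ℝ)) * (A t)ᵀ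
        = W t + δ • (A t * (A t)ᵀ) := by
      rw [mul_smul_comm, mul_one, smul_mul_assoc]
    rw [hB, hD', hA11, hC]
    have hA11pd : ((δ - δ ^ 2) • (1 : Matrix (Fin n) (Fin n) ℝ)).PosDef := hsmulPD _ hd
    have hrinv : ((δ - δ ^ 2) • (1 : Matrix (Fin n) (Fin n) ℝ))
        * ((δ - δ ^ 2)⁻¹ • (1 : Matrix (Fin n) (Fin n) ℝ)) = 1 := by
      rw [smul_mul_assoc, mul_smul_comm, mul_one, smul_smul, mul_inv_cancel₀ hd.ne', one_smul]
    haveI : Invertible ((δ - δ ^ 2) • (1 : Matrix (Fin n) (Fin n) ℝ)) :=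
      invertibleOfRightInverse _ _ hrinv
    apply posDef_fromBlocks _ _ hA11pd
    have hinv : ((δ - δ ^ 2) • (1 : Matrix (Fin n) (Fin n) ℝ))⁻¹
        = (δ - δ ^ 2)⁻¹ • (1 : Matrix (Fin n) (Fin n) ℝ) := inv_eq_right_inv hrinv
    rw [hinv, hBH]
    have hmul : (δ • A t) * ((δ - δ ^ 2)⁻¹ • (1 : Matrix (Fin n) (Fin n) ℝ)) * (δ • (A t)ᵀ)
        = (δ * (δ - δ ^ 2)⁻¹ * δ) • (A t * (A t)ᵀ) := by
      simp only [smul_mul_assoc, mul_smul_comm, Matrix.mul_one, smul_smul]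
      congr 1
      ring
    rw [hmul]
    have hsval : δ * (δ - δ ^ 2)⁻¹ * δ - δ = δ ^ 2 / (1 - δ) := by
      rw [inv_eq_one_div]
      field_simp
      ring
    have hr0 : 0 ≤ δ * (δ - δ ^ 2)⁻¹ * δ - δ := by
      rw [hsval]
      exact div_nonneg (by positivity) (le_of_lt h1δ)
    have hr1 : δ * (δ - δ ^ 2)⁻¹ * δ - δ ≤ δ := by
      rw [hsval, div_le_iff₀ h1δ]
      nlinarith
    have heq2 : W t + δ • (A t * (A t)ᵀ) - (δ * (δ - δ ^ 2)⁻¹ * δ) • (A t * (A t)ᵀ)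
        = W t - (δ * (δ - δ ^ 2)⁻¹ * δ - δ) • (A t * (A t)ᵀ) := by
      rw [sub_smul]
      abel
    rw [heq2]
    exact he2spec t ht _ hr0 (le_trans hr1 (hδe2 t ht))
  · -- trace constraint
    intro t h1t htT
    beta_reduce
    rw [if_neg (by omega : ¬ t = 0)]
    set c : ℝ := if t < T then δ else δ ^ 2 with hc
    have hc0 : (0:ℝ) ≤ c := by rw [hc]; split_ifs <;> positivity
    have hcδ : c ≤ δ := by
      rw [hc]; split_ifs
      · exact le_rfl
      · exact hδsq
    have hPt : (if t < T then δ • (1 : Matrix (Fin n) (Fin n) ℝ)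
        else δ ^ 2 • (1 : Matrix (Fin n) (Fin n) ℝ)) = c • (1 : Matrix (Fin n) (Fin n) ℝ) := by
      rw [hc]; split_ifs <;> rfl
    rw [hPt, mul_smul_comm, mul_one, trace_smul, smul_eq_mul]
    have htr0 : 0 ≤ (Θ t).trace := psd_trace_nonneg (hΘ t h1t htT)
    have hδβ' : δ ≤ β (t - 1) := hδβ (t - 1) (by omega)
    have ht1 : t - 1 + 1 = t := by omega
    rw [hβdef] at hδβ'
    simp only [ht1] at hδβ'
    have hkey : δ * ((Θ t).trace + 1) ≤ D t := (le_div_iff₀ (by linarith)).mp hδβ'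
    have hmono : c * (Θ t).trace ≤ δ * (Θ t).trace := mul_le_mul_of_nonneg_right hcδ htr0
    nlinarith
  · -- terminal condition
    beta_reduce
    rw [if_neg (by omega : ¬ T = 0), if_neg (lt_irrefl T)]
end

section
/- Let a ∈ ℝ and w > 0, D > 0 be reals. Then the infimum of log(a² + w/p) over the set of reals p with 0 < p, p ≤ a²·p + w, and p ≤ D equals max{0, log(a² + w/D)}. -/
/-- For reals `a`, `w > 0`, `D > 0`, the infimum of `log (a² + w/p)`
over reals `p` with `0 < p`, `p ≤ a² p + w`, `p ≤ D`, equals `max 0 (log (a² + w/D))`. -/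
theorem scalar_stationary_srd (a w D : ℝ) (hw : 0 < w) (hD : 0 < D) :
    sInf {x : ℝ | ∃ p : ℝ, 0 < p ∧ p ≤ a ^ 2 * p + w ∧ p ≤ D ∧
        x = Real.log (a ^ 2 + w / p)} =
      max 0 (Real.log (a ^ 2 + w / D)) := by
  apply IsLeast.csInf_eq
  constructor
  · -- membership
    rcases le_or_gt 1 (a ^ 2 + w / D) with h | h
    · refine ⟨D, hD, ?_, le_refl D, ?_⟩
      · nlinarith [div_mul_cancel₀ w hD.ne', mul_le_mul_of_nonneg_right h hD.le]
      · rw [max_eq_right (Real.log_nonneg h)]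
    · have h1 : w < (1 - a ^ 2) * D := by
        nlinarith [div_mul_cancel₀ w hD.ne']
      have ha : 0 < 1 - a ^ 2 := by nlinarith
      refine ⟨w / (1 - a ^ 2), div_pos hw ha, ?_, ?_, ?_⟩
      · have hc : (1 - a ^ 2) * (w / (1 - a ^ 2)) = w := by field_simp
        nlinarith
      · rw [div_le_iff₀ ha]; nlinarith
      · have hp : a ^ 2 + w / (w / (1 - a ^ 2)) = 1 := by
          field_simp
          ring
        rw [hp, Real.log_one, max_eq_left]
        exact le_of_lt (Real.log_neg (by positivity) h)
  · rintro x ⟨p, hp, hc, hpD, rfl⟩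
    have h1 : (1 : ℝ) ≤ a ^ 2 + w / p := by
      nlinarith [div_mul_cancel₀ w hp.ne']
    apply max_le (Real.log_nonneg h1)
    apply Real.log_le_log (by positivity)
    gcongr
end

section
/- Let a ∈ ℝ and w > 0, D > 0 be reals. Consider the scalar semidefinite representation: minimize −½ log π + ½ log w over pairs of reals (p, π) satisfying π > 0, p ≤ a²·p + w, p ≤ D, and the 2×2 matrix [[p − π, p·a],[a·p, a²·p + w]] positive semidefinite. Then the optimal value (infimum) equals max{0, ½ log(a² + w/D)}. -/
lemma psd2 (A B C : ℝ) (hA : 0 ≤ A) (hC : 0 ≤ C) (hdet : B ^ 2 ≤ A * C) :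
    (!![A, B; B, C]).PosSemidef := by
  rw [Matrix.posSemidef_iff_dotProduct_mulVec]
  constructor
  · ext i j
    fin_cases i <;> fin_cases j <;> rfl
  · intro x
    simp only [Matrix.mulVec, dotProduct, Fin.sum_univ_two, Matrix.cons_val_zero,
      Matrix.cons_val_one, Matrix.head_cons, star_trivial, Matrix.of_apply,
      Matrix.cons_val', Matrix.empty_val', Matrix.cons_val_fin_one, Matrix.head_fin_const]
    rcases eq_or_lt_of_le hC with h0 | hCpos
    · have hB : B = 0 := by nlinarith [sq_nonneg B]
      subst hB
      rw [← h0]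
      nlinarith [mul_nonneg hA (sq_nonneg (x 0))]
    · nlinarith [sq_nonneg (B * x 0 + C * x 1),
        mul_nonneg (sub_nonneg.2 hdet) (sq_nonneg (x 0))]

/-- For reals `a`, `w > 0`, `D > 0`, the infimum of
`−½ log q + ½ log w` over pairs `(p, q)` with `q > 0`, `p ≤ a² p + w`, `p ≤ D`, and
the 2×2 matrix `[[p − q, p a],[a p, a² p + w]]` positive semidefinite, equals
`max 0 (½ log (a² + w/D))`. -/
theorem scalar_srd_sdp (a w D : ℝ) (hw : 0 < w) (hD : 0 < D) :
    sInf {x : ℝ | ∃ p q : ℝ, 0 < q ∧ p ≤ a ^ 2 * p + w ∧ p ≤ D ∧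
        (!![p - q, p * a; a * p, a ^ 2 * p + w]).PosSemidef ∧
        x = -(1 / 2) * Real.log q + (1 / 2) * Real.log w} =
      max 0 ((1 / 2) * Real.log (a ^ 2 + w / D)) := by
  set m := max 0 ((1 / 2) * Real.log (a ^ 2 + w / D)) with hm
  have hc : 0 < a ^ 2 + w / D := by positivity
  -- lower bound: every element of the set is ≥ m
  have lb : ∀ x ∈ {x : ℝ | ∃ p q : ℝ, 0 < q ∧ p ≤ a ^ 2 * p + w ∧ p ≤ D ∧
      (!![p - q, p * a; a * p, a ^ 2 * p + w]).PosSemidef ∧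
      x = -(1 / 2) * Real.log q + (1 / 2) * Real.log w}, m ≤ x := by
    rintro x ⟨p, q, hq, h1, h2, hpsd, rfl⟩
    have hA : 0 ≤ p - q := by
      have h := hpsd.dotProduct_mulVec_nonneg ![1, 0]
      simp [Matrix.mulVec, dotProduct, Fin.sum_univ_two] at h
      linarith
    have hp : 0 < p := by linarith
    have hC : 0 < a ^ 2 * p + w := lt_of_lt_of_le hp h1
    have hd := hpsd.dotProduct_mulVec_nonneg ![a ^ 2 * p + w, -(a * p)]
    simp [Matrix.mulVec, dotProduct, Fin.sum_univ_two] at hd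
    have hE : 0 ≤ (p - q) * (a ^ 2 * p + w) - a ^ 2 * p ^ 2 := by nlinarith [hd, hC]
    have key : q * (a ^ 2 * p + w) ≤ p * w := by nlinarith [hE]
    have hqw : q ≤ w := by nlinarith [key, mul_le_mul_of_nonneg_right h1 hw.le]
    have hineq : a ^ 2 + w / D ≤ w / q := by
      have hDq : (a ^ 2 * D + w) * q ≤ w * D := by
        nlinarith [mul_le_mul_of_nonneg_left key hD.le,
          mul_nonneg (mul_nonneg hw.le hq.le) (sub_nonneg.2 h2)]
      have e : a ^ 2 + w / D = (a ^ 2 * D + w) / D := by field_simp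
      rw [e, div_le_div_iff₀ hD hq]
      linarith
    have hlog1 : Real.log q ≤ Real.log w := (Real.log_le_log_iff hq hw).2 hqw
    have hlog2 : Real.log (a ^ 2 + w / D) ≤ Real.log w - Real.log q := by
      have h := (Real.log_le_log_iff hc (by positivity)).2 hineq
      rwa [Real.log_div hw.ne' hq.ne'] at h
    rw [hm]
    apply max_le <;> linarith
  -- membership: m itself is achieved
  have hmem : m ∈ {x : ℝ | ∃ p q : ℝ, 0 < q ∧ p ≤ a ^ 2 * p + w ∧ p ≤ D ∧
      (!![p - q, p * a; a * p, a ^ 2 * p + w]).PosSemidef ∧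
      x = -(1 / 2) * Real.log q + (1 / 2) * Real.log w} := by
    rcases le_or_gt 1 (a ^ 2 + w / D) with hc1 | hc1
    · -- c ≥ 1 : take p = D, q = D w / (a² D + w)
      have hK : 0 < a ^ 2 * D + w := by positivity
      refine ⟨D, D * w / (a ^ 2 * D + w), by positivity, ?_, le_refl D, ?_, ?_⟩
      · -- D ≤ a² D + w
        have hwD : w / D * D = w := div_mul_cancel₀ w hD.ne'
        nlinarith [mul_le_mul_of_nonneg_right hc1 hD.le]
      · have hA' : 0 ≤ D - D * w / (a ^ 2 * D + w) := by
          rw [sub_nonneg, div_le_iff₀ hK]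
          nlinarith [mul_nonneg (mul_nonneg hD.le (sq_nonneg a)) hD.le]
        have hdet' : (D * a) ^ 2 ≤ (D - D * w / (a ^ 2 * D + w)) * (a ^ 2 * D + w) := by
          have e : (D - D * w / (a ^ 2 * D + w)) * (a ^ 2 * D + w) = a ^ 2 * D ^ 2 := by
            field_simp
            ring
          rw [e]; nlinarith
        have := psd2 (D - D * w / (a ^ 2 * D + w)) (D * a) (a ^ 2 * D + w) hA' hK.le hdet'
        simpa [mul_comm] using this
      · have hq' : Real.log (D * w / (a ^ 2 * D + w))
            = Real.log D + Real.log w - Real.log (a ^ 2 * D + w) := by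
          rw [Real.log_div (by positivity) hK.ne', Real.log_mul hD.ne' hw.ne']
        have hc' : Real.log (a ^ 2 + w / D) = Real.log (a ^ 2 * D + w) - Real.log D := by
          rw [show a ^ 2 + w / D = (a ^ 2 * D + w) / D by field_simp,
            Real.log_div hK.ne' hD.ne']
        rw [hm, max_eq_right (by nlinarith [Real.log_nonneg hc1])]
        linarith
    · -- c < 1 : take p = w / (1 - a²), q = w
      have ha2 : a ^ 2 < 1 := by nlinarith [div_pos hw hD]
      have h1a : 0 < 1 - a ^ 2 := by linarith
      have hp : 0 < w / (1 - a ^ 2) := by positivity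
      have heq : a ^ 2 * (w / (1 - a ^ 2)) + w = w / (1 - a ^ 2) := by
        field_simp
        ring
      refine ⟨w / (1 - a ^ 2), w, hw, le_of_eq heq.symm, ?_, ?_, ?_⟩
      · rw [div_le_iff₀ h1a]
        have hwD : w / D * D = w := div_mul_cancel₀ w hD.ne'
        nlinarith [mul_lt_mul_of_pos_right (show w / D < 1 - a ^ 2 by linarith) hD]
      · have hA' : 0 ≤ w / (1 - a ^ 2) - w := by
          rw [sub_nonneg, le_div_iff₀ h1a]
          nlinarith [sq_nonneg a]
        have hdet' : ((w / (1 - a ^ 2)) * a) ^ 2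
            ≤ (w / (1 - a ^ 2) - w) * (a ^ 2 * (w / (1 - a ^ 2)) + w) := by
          rw [heq]
          have e : (w / (1 - a ^ 2) - w) * (w / (1 - a ^ 2))
              = ((w / (1 - a ^ 2)) * a) ^ 2 := by
            field_simp
            ring
          rw [e]
        have := psd2 (w / (1 - a ^ 2) - w) ((w / (1 - a ^ 2)) * a)
          (a ^ 2 * (w / (1 - a ^ 2)) + w) hA' (by positivity) (by rw [heq] at *; exact hdet')
        simpa [mul_comm] using this
      · rw [hm, max_eq_left]
        · ring
        · have := Real.log_nonpos hc.le hc1.le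
          linarith
  have hne : {x : ℝ | ∃ p q : ℝ, 0 < q ∧ p ≤ a ^ 2 * p + w ∧ p ≤ D ∧
      (!![p - q, p * a; a * p, a ^ 2 * p + w]).PosSemidef ∧
      x = -(1 / 2) * Real.log q + (1 / 2) * Real.log w}.Nonempty := ⟨m, hmem⟩
  exact le_antisymm (csInf_le ⟨m, lb⟩ hmem) (le_csInf hne lb)
end

section
/- Let n be a positive integer, c > 0 a real, and Λ a diagonal n×n real matrix with positive diagonal entries. Let P be a symmetric positive definite n×n real matrix with P ⪯ Λ, and let P_d be the diagonal matrix whose diagonal entries agree with those of P. Then P_d is positive definite, P_d ⪯ Λ, Tr(P_d) = Tr(P), det(P_d) ≥ det(P), and consequently Tr(P_d) − c·log det(P_d) ≤ Tr(P) − c·log det(P). -/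
open Matrix

/-- Diagonal entries of a real positive definite matrix are positive. -/
lemma posdef_diag_pos {n : ℕ} {P : Matrix (Fin n) (Fin n) ℝ} (hP : P.PosDef) (i : Fin n) :
    0 < P i i := by
  have := hP.dotProduct_mulVec_pos (x := Pi.single i 1) (by simp [Pi.single_eq_same, Function.ne_iff])
  simpa [Matrix.mulVec, dotProduct, Pi.single_apply] using this

/-- Hadamard's inequality for real positive definite matrices, via LDL decomposition. -/
lemma hadamard_det_le {n : ℕ} {P : Matrix (Fin n) (Fin n) ℝ} (hP : P.PosDef) :
    P.det ≤ ∏ i, P i i := by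
  haveI : WellFoundedLT (Fin n) := inferInstance
  letI : DecidableEq (Fin n) := fun a b => LinearOrder.toDecidableEq a b
  haveI := LDL.invertibleLowerInv hP
  set W := LDL.lowerInv hP with hWdef
  set L := LDL.lower hP with hLdef
  set e := LDL.diagEntries hP with hedef
  have hW : W.BlockTriangular OrderDual.toDual := fun i j h => LDL.lowerInv_triangular hP h
  have hDeq : LDL.diag hP = Matrix.diagonal e := rfl
  have hL : L.BlockTriangular OrderDual.toDual := by
    rw [hLdef]
    show (W⁻¹).BlockTriangular OrderDual.toDual
    exact Matrix.blockTriangular_inv_of_blockTriangular hW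
  have hPeq : L * Matrix.diagonal e * Lᵀ = P := by
    have := LDL.lower_conj_diag hP
    rw [Matrix.conjTranspose_eq_transpose_of_trivial, hDeq] at this
    exact this
  -- nonnegativity of the e i
  have hDps : (Matrix.diagonal e).PosSemidef := by
    rw [← hDeq, LDL.diag_eq_lowerInv_conj hP]
    exact hP.posSemidef.mul_mul_conjTranspose_same W
  have he : ∀ i, 0 ≤ e i := fun i => by
    have := hDps.dotProduct_mulVec_nonneg (Pi.single i 1)
    simpa [Matrix.mulVec, dotProduct, Pi.single_apply, Matrix.diagonal] using this
  -- diagonal entries of P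
  have hdiag : ∀ i, P i i = ∑ j, L i j ^ 2 * e j := by
    intro i
    rw [← hPeq, Matrix.mul_apply]
    simp only [Matrix.mul_diagonal, Matrix.transpose_apply]
    exact Finset.sum_congr rfl fun j _ => by ring
  have hterm : ∀ i, L i i ^ 2 * e i ≤ P i i := by
    intro i
    rw [hdiag i]
    exact Finset.single_le_sum (fun j _ => mul_nonneg (sq_nonneg _) (he j)) (Finset.mem_univ i)
  have hdet : P.det = ∏ i, L i i ^ 2 * e i := by
    rw [← hPeq, Matrix.det_mul, Matrix.det_mul, Matrix.det_transpose,
      Matrix.det_diagonal, Matrix.det_of_lowerTriangular L hL]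
    rw [← Finset.prod_mul_distrib, ← Finset.prod_mul_distrib]
    exact Finset.prod_congr rfl fun i _ => by ring
  rw [show (instDecidableEqFin n) = (fun a b => LinearOrder.toDecidableEq a b : DecidableEq (Fin n))
    from Subsingleton.elim _ _]
  rw [hdet]
  exact Finset.prod_le_prod (fun i _ => mul_nonneg (sq_nonneg _) (he i))
    (fun i _ => hterm i)

/-- Let `Λ = diagonal d` with `d i > 0`, `c > 0`, and let `P` be
symmetric positive definite with `P ⪯ Λ`. Let `P_d` be the diagonal matrix with the same
diagonal as `P`. Then `P_d ≻ 0`, `P_d ⪯ Λ`, `Tr P_d = Tr P`, `det P ≤ det P_d`, and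
consequently `Tr P_d − c log det P_d ≤ Tr P − c log det P`. -/
theorem diagonal_restriction (n : ℕ) (hn : 0 < n) (c : ℝ) (hc : 0 < c)
    (d : Fin n → ℝ) (hd : ∀ i, 0 < d i)
    (P : Matrix (Fin n) (Fin n) ℝ) (hP : P.PosDef)
    (hPle : (Matrix.diagonal d - P).PosSemidef) :
    (Matrix.diagonal (fun i => P i i)).PosDef ∧
    (Matrix.diagonal d - Matrix.diagonal (fun i => P i i)).PosSemidef ∧
    (Matrix.diagonal (fun i => P i i)).trace = P.trace ∧
    P.det ≤ (Matrix.diagonal (fun i => P i i)).det ∧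
    (Matrix.diagonal (fun i => P i i)).trace -
        c * Real.log (Matrix.diagonal (fun i => P i i)).det ≤
      P.trace - c * Real.log P.det := by
  classical
  have hdiagpos : ∀ i, 0 < P i i := posdef_diag_pos hP
  have h1 : (Matrix.diagonal (fun i => P i i)).PosDef :=
    Matrix.PosDef.diagonal hdiagpos
  have h2 : (Matrix.diagonal d - Matrix.diagonal (fun i => P i i)).PosSemidef := by
    rw [Matrix.diagonal_sub]
    refine Matrix.PosSemidef.diagonal fun i => ?_
    have := hPle.dotProduct_mulVec_nonneg (Pi.single i 1)
    simpa [Matrix.mulVec, dotProduct, Pi.single_apply, Matrix.sub_apply,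
      Matrix.diagonal, sub_nonneg] using this
  have h3 : (Matrix.diagonal (fun i => P i i)).trace = P.trace := by
    simp [Matrix.trace, Matrix.diag]
  have h4 : P.det ≤ (Matrix.diagonal (fun i => P i i)).det := by
    rw [Matrix.det_diagonal]
    exact hadamard_det_le hP
  refine ⟨h1, h2, h3, h4, ?_⟩
  have hlog : Real.log P.det ≤ Real.log (Matrix.diagonal (fun i => P i i)).det :=
    Real.log_le_log hP.det_pos h4
  nlinarith [mul_le_mul_of_nonneg_left hlog hc.le]
end

section
/- Let n and k be positive integers, let μ be a Gaussian probability measure on ℝ^n with positive definite covariance matrix, and let E be a nonzero k×n real matrix. Let p be the pushforward of μ under the map x ↦ (x, E x), a probability measure on ℝ^n × ℝ^k, and let p_X and p_Y be its marginals. Then p is not absolutely continuous with respect to the product measure p_X × p_Y; consequently the Kullback–Leibler divergence D_KL(p ‖ p_X × p_Y) (the mutual information between x and E x) equals +∞. -/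
open MeasureTheory ProbabilityTheory
open scoped ENNReal NNReal

open Classical in
/-- Kullback–Leibler divergence: `∫ log (dp/dq) dp` if `p ≪ q`, and `+∞` otherwise. -/
noncomputable def klDiv {Ω : Type*} [MeasurableSpace Ω] (p q : Measure Ω) : ℝ≥0∞ :=
  if p ≪ q then ENNReal.ofReal (∫ ω, Real.log (p.rnDeriv q ω).toReal ∂p) else ⊤

/-- A measure is Gaussian if every continuous linear functional has a (possibly
degenerate) Gaussian distribution on `ℝ`. -/
def IsGaussianMeasure {E : Type*} [NormedAddCommGroup E] [NormedSpace ℝ E]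
    [MeasurableSpace E] (μ : Measure E) : Prop :=
  ∀ L : E →L[ℝ] ℝ, ∃ (m : ℝ) (v : ℝ≥0), μ.map L = gaussianReal m v

/-- The covariance matrix of a measure on `ℝ^n`. -/
noncomputable def covMatrix {n : ℕ} (μ : Measure (Fin n → ℝ)) :
    Matrix (Fin n) (Fin n) ℝ :=
  Matrix.of fun i j =>
    ∫ x, (x i - ∫ y, y i ∂μ) * (x j - ∫ y, y j ∂μ) ∂μ

lemma aux_integrable_sq_mul_gaussianPDFReal (m : ℝ) {v : ℝ≥0} (hv : v ≠ 0) :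
    Integrable (fun x : ℝ => x ^ 2 * gaussianPDFReal m v x) := by
  have hvpos : (0 : ℝ) < (v : ℝ) := by positivity
  set b : ℝ := (2 * (v : ℝ))⁻¹ with hb
  have hbpos : 0 < b := by positivity
  set C : ℝ := (Real.sqrt (2 * Real.pi * (v : ℝ)))⁻¹ with hC
  have h1 : Integrable (fun y : ℝ => (y + m) ^ 2 * (C * Real.exp (-b * y ^ 2))) := by
    have hsq : Integrable (fun y : ℝ => y ^ 2 * Real.exp (-b * y ^ 2)) := by
      have := integrable_rpow_mul_exp_neg_mul_sq hbpos (s := 2) (by norm_num)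
      refine this.congr ?_
      filter_upwards with y
      rw [show ((2:ℝ) = ((2:ℕ):ℝ)) by norm_num, Real.rpow_natCast]
    have hlin : Integrable (fun y : ℝ => y * Real.exp (-b * y ^ 2)) :=
      integrable_mul_exp_neg_mul_sq hbpos
    have hcst : Integrable (fun y : ℝ => Real.exp (-b * y ^ 2)) :=
      integrable_exp_neg_mul_sq hbpos
    have : Integrable (fun y : ℝ =>
        C * (y ^ 2 * Real.exp (-b * y ^ 2)) + ((2 * m * C) * (y * Real.exp (-b * y ^ 2))
          + (m ^ 2 * C) * Real.exp (-b * y ^ 2))) :=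
      (hsq.const_mul C).add ((hlin.const_mul _).add (hcst.const_mul _))
    refine this.congr ?_
    filter_upwards with y
    ring
  have h2 : Integrable (fun x : ℝ => ((x - m) + m) ^ 2 * (C * Real.exp (-b * (x - m) ^ 2))) :=
    h1.comp_sub_right m
  refine h2.congr ?_
  filter_upwards with x
  have : -(x - m) ^ 2 / (2 * (v : ℝ)) = -b * (x - m) ^ 2 := by
    rw [hb]; field_simp
  rw [gaussianPDFReal]
  rw [this]
  ring

lemma aux_memℒp_id_two_gaussianReal (m : ℝ) (v : ℝ≥0) :
    MemLp (id : ℝ → ℝ) 2 (gaussianReal m v) := by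
  by_cases hv : v = 0
  · subst hv
    rw [gaussianReal_zero_var]
    refine (memLp_const m).ae_eq ?_
    simp [Filter.EventuallyEq, ae_dirac_eq]
  · rw [(memLp_two_iff_integrable_sq aestronglyMeasurable_id)]
    rw [gaussianReal_of_var_ne_zero _ hv]
    rw [integrable_withDensity_iff (measurable_gaussianPDF _ _)
      (Filter.Eventually.of_forall fun _ => ENNReal.ofReal_lt_top)]
    refine (aux_integrable_sq_mul_gaussianPDFReal m hv).congr ?_
    filter_upwards with x
    simp only [id_eq, gaussianPDF_def, ENNReal.toReal_ofReal (gaussianPDFReal_nonneg m v x)]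

lemma aux_memℒp_clm {n : ℕ} (μ : Measure (Fin n → ℝ)) [IsProbabilityMeasure μ]
    (hGauss : IsGaussianMeasure μ)
    (L : (Fin n → ℝ) →L[ℝ] ℝ) : MemLp (fun x => L x) 2 μ := by
  obtain ⟨m, v, hmv⟩ := hGauss L
  have h := (memLp_map_measure_iff (p := 2) (f := (L : (Fin n → ℝ) → ℝ)) (g := (id : ℝ → ℝ))
    (by rw [hmv]; exact aestronglyMeasurable_id) L.continuous.measurable.aemeasurable).mp
    (by rw [hmv]; exact aux_memℒp_id_two_gaussianReal m v)
  simpa [Function.comp] using h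

/-- Let `μ` be a Gaussian measure on `ℝ^n` with positive definite
covariance, let `E` be a nonzero `k × n` real matrix, and let `p` be the law of
`x ↦ (x, E x)` under `μ`. Then `p` is not absolutely continuous with respect to the
product of its marginals, and hence the mutual information
`D_KL(p ‖ p_X × p_Y)` is `+∞`. -/
theorem deterministic_linear_observation_infinite_mi (n k : ℕ) (hn : 0 < n) (hk : 0 < k)
    (μ : Measure (Fin n → ℝ)) [IsProbabilityMeasure μ]
    (hGauss : IsGaussianMeasure μ) (hcov : (covMatrix μ).PosDef)
    (E : Matrix (Fin k) (Fin n) ℝ) (hE : E ≠ 0) :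
    ¬ (μ.map fun x => (x, E.mulVec x)) ≪
        (((μ.map fun x => (x, E.mulVec x)).map Prod.fst).prod
          ((μ.map fun x => (x, E.mulVec x)).map Prod.snd)) ∧
    klDiv (μ.map fun x => (x, E.mulVec x))
        (((μ.map fun x => (x, E.mulVec x)).map Prod.fst).prod
          ((μ.map fun x => (x, E.mulVec x)).map Prod.snd)) = ⊤ := by
  classical
  have hEcont : Continuous (fun x : Fin n → ℝ => E.mulVec x) := by
    have := (Matrix.mulVecLin E).continuous_of_finiteDimensional
    simpa [Matrix.coe_mulVecLin] using this
  have hEm : Measurable (fun x : Fin n → ℝ => E.mulVec x) := hEcont.measurable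
  set f : (Fin n → ℝ) → ((Fin n → ℝ) × (Fin k → ℝ)) := fun x => (x, E.mulVec x) with hfdef
  have hf : Measurable f := measurable_id.prodMk hEm
  -- pick a nonzero row
  obtain ⟨i0, j0, hij0⟩ : ∃ i j, E i j ≠ 0 := by
    by_contra h
    push_neg at h
    exact hE (by ext i j; simpa using h i j)
  set c : Fin n → ℝ := fun j => E i0 j with hcdef
  have hc : c ≠ 0 := fun h => hij0 (by simpa [hcdef] using congrFun h j0)
  -- the row functional
  set L : (Fin n → ℝ) →L[ℝ] ℝ :=
    ∑ j, c j • ContinuousLinearMap.proj (R := ℝ) (φ := fun _ : Fin n => ℝ) j with hLdef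
  have hLapp : ∀ x, L x = ∑ j, c j * x j := by
    intro x
    simp [hLdef, ContinuousLinearMap.sum_apply, smul_eq_mul]
  obtain ⟨m, v, hmv⟩ := hGauss L
  -- moments
  have hcoord : ∀ j : Fin n, MemLp (fun x : Fin n → ℝ => x j) 2 μ := by
    intro j
    have := aux_memℒp_clm μ hGauss (ContinuousLinearMap.proj (R := ℝ) (φ := fun _ : Fin n => ℝ) j)
    simpa using this
  set mbar : Fin n → ℝ := fun j => ∫ y, y j ∂μ with hmbar
  have hint : ∀ j, Integrable (fun x : Fin n → ℝ => x j) μ :=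
    fun j => (hcoord j).integrable one_le_two
  have hmem : ∀ j, MemLp (fun x : Fin n → ℝ => x j - mbar j) 2 μ :=
    fun j => (hcoord j).sub (memLp_const (mbar j))
  have hhalf : (1 : ℝ≥0∞) / 1 = 1 / 2 + 1 / 2 := by
    rw [ENNReal.div_add_div_same]
    norm_num
    rw [ENNReal.div_self (by norm_num) (by norm_num)]
  have hprod : ∀ i j, Integrable (fun x : Fin n → ℝ =>
      (x i - mbar i) * (x j - mbar j)) μ := by
    intro i j
    have h := (hmem j).smul (hmem i) (r := 1)
    have h' := memLp_one_iff_integrable.mp h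
    refine h'.congr ?_
    filter_upwards with x
    simp [Pi.smul_apply', smul_eq_mul, mul_comm]
  -- variance is nonzero
  have hv : v ≠ 0 := by
    intro hv0
    subst hv0
    rw [gaussianReal_zero_var] at hmv
    have hae : ∀ᵐ x ∂μ, L x = m := by
      have h1 : ∀ᵐ y ∂(μ.map L), y = m := by
        rw [hmv, ae_dirac_eq]
        exact Filter.eventually_pure.mpr rfl
      exact (ae_map_iff L.continuous.measurable.aemeasurable (measurableSet_eq)).mp h1
    have hLint : ∫ x, L x ∂μ = m := by
      rw [integral_congr_ae (g := fun _ => m) hae]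
      simp
    have hsum : ∑ j, c j * mbar j = m := by
      calc ∑ j, c j * mbar j = ∑ j, ∫ x, c j * x j ∂μ := by
            refine Finset.sum_congr rfl fun j _ => ?_
            rw [integral_const_mul]
        _ = ∫ x, ∑ j, c j * x j ∂μ :=
            (integral_finset_sum _ fun j _ => (hint j).const_mul _).symm
        _ = ∫ x, L x ∂μ := by
            refine integral_congr_ae (Filter.Eventually.of_forall fun x => ?_)
            rw [hLapp]
        _ = m := hLint
    have hz : ∀ᵐ x ∂μ, ∑ j, c j * (x j - mbar j) = 0 := by
      filter_upwards [hae] with x hx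
      have hsplit : ∑ j, c j * (x j - mbar j)
          = (∑ j, c j * x j) - ∑ j, c j * mbar j := by
        rw [← Finset.sum_sub_distrib]
        exact Finset.sum_congr rfl fun j _ => by ring
      rw [hsplit, ← hLapp x, hx, hsum, sub_self]
    have hinner : ∀ i, ∑ j, covMatrix μ i j * c j = 0 := by
      intro i
      calc ∑ j, covMatrix μ i j * c j
          = ∑ j, ∫ x, c j * ((x i - mbar i) * (x j - mbar j)) ∂μ := by
            refine Finset.sum_congr rfl fun j _ => ?_
            rw [integral_const_mul, mul_comm]
            rfl
        _ = ∫ x, ∑ j, c j * ((x i - mbar i) * (x j - mbar j)) ∂μ :=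
            (integral_finset_sum _ fun j _ => ((hprod i j).const_mul _)).symm
        _ = ∫ x, (x i - mbar i) * ∑ j, c j * (x j - mbar j) ∂μ := by
            refine integral_congr_ae (Filter.Eventually.of_forall fun x => ?_)
            simp only [Finset.mul_sum]
            exact Finset.sum_congr rfl fun j _ => by ring
        _ = 0 := by
            have hzz : (fun x : Fin n → ℝ =>
                (x i - mbar i) * ∑ j, c j * (x j - mbar j)) =ᵐ[μ] 0 := by
              filter_upwards [hz] with x hx
              simp [hx]
            rw [integral_congr_ae hzz]
            simp
    have hpos := hcov.dotProduct_mulVec_pos hc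
    have hzero : dotProduct (star c) ((covMatrix μ).mulVec c) = 0 := by
      simp only [dotProduct, Matrix.mulVec, hinner, Pi.star_apply, star_trivial]
      simp [dotProduct, hinner]
    rw [hzero] at hpos
    exact lt_irrefl _ hpos
  -- singletons of the Y-marginal have measure zero
  have hsing : ∀ y : Fin k → ℝ, μ.map (fun x => E.mulVec x) {y} = 0 := by
    intro y
    rw [Measure.map_apply hEm (measurableSet_singleton y)]
    have hsub : (fun x : Fin n → ℝ => E.mulVec x) ⁻¹' {y} ⊆ {x | L x = y i0} := by
      intro x hx
      simp only [Set.mem_preimage, Set.mem_singleton_iff] at hx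
      have hxy : (E.mulVec x) i0 = y i0 := by rw [hx]
      have : (E.mulVec x) i0 = L x := by
        rw [hLapp]
        simp [Matrix.mulVec, dotProduct, hcdef]
      rw [Set.mem_setOf_eq, ← this, hxy]
    refine le_antisymm ?_ zero_le
    calc μ ((fun x : Fin n → ℝ => E.mulVec x) ⁻¹' {y})
        ≤ μ {x | L x = y i0} := measure_mono hsub
      _ = μ (L ⁻¹' {y i0}) := rfl
      _ = (μ.map L) {y i0} := (Measure.map_apply L.continuous.measurable
            (measurableSet_singleton _)).symm
      _ = gaussianReal m v {y i0} := by rw [hmv]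
      _ = 0 := (gaussianReal_absolutelyContinuous m hv) (measure_singleton _)
  -- the graph set
  set S : Set ((Fin n → ℝ) × (Fin k → ℝ)) := {q | E.mulVec q.1 = q.2} with hSdef
  have hSm : MeasurableSet S := measurableSet_eq_fun (hEm.comp measurable_fst) measurable_snd
  have hpS : (μ.map f) S = 1 := by
    rw [Measure.map_apply hf hSm]
    have : f ⁻¹' S = Set.univ := by
      ext x
      simp [hSdef, hfdef]
    rw [this]
    exact measure_univ
  haveI : IsProbabilityMeasure (μ.map f) := Measure.isProbabilityMeasure_map hf.aemeasurable
  haveI : IsProbabilityMeasure ((μ.map f).map Prod.fst) :=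
    Measure.isProbabilityMeasure_map measurable_fst.aemeasurable
  haveI : IsProbabilityMeasure ((μ.map f).map Prod.snd) :=
    Measure.isProbabilityMeasure_map measurable_snd.aemeasurable
  have hY : (μ.map f).map Prod.snd = μ.map (fun x => E.mulVec x) := by
    rw [Measure.map_map measurable_snd hf]
    rfl
  have hprodS : (((μ.map f).map Prod.fst).prod ((μ.map f).map Prod.snd)) S = 0 := by
    rw [Measure.prod_apply hSm]
    have hpre : ∀ x : Fin n → ℝ, (Prod.mk x ⁻¹' S) = {E.mulVec x} := by
      intro x
      ext y
      simp [hSdef, eq_comm]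
    calc ∫⁻ x, ((μ.map f).map Prod.snd) (Prod.mk x ⁻¹' S) ∂((μ.map f).map Prod.fst)
        = ∫⁻ _, 0 ∂((μ.map f).map Prod.fst) := by
          refine lintegral_congr fun x => ?_
          rw [hpre x, hY, hsing]
      _ = 0 := lintegral_zero
  have hnot : ¬ (μ.map f) ≪
      (((μ.map f).map Prod.fst).prod ((μ.map f).map Prod.snd)) := by
    intro h
    have := h hprodS
    rw [hpS] at this
    exact one_ne_zero this
  refine ⟨hnot, ?_⟩
  rw [klDiv, if_neg hnot]
end
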